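/- For every configuration η ∈ S_L of a general KCM there exists a configuration η* in the same irreducible component as η such that η*_x ∈ I_x for every x ∈ {η}_L^ω; that is, the whole closure can be simultaneously infected within the irreducible component. -/

import Mathlib

open scoped Classical

namespace KCM

/-- A full configuration assigns a state to every site of `ℤ`.  The boundary
condition is the restriction of a configuration outside the volume. -/
abbrev Config (S : ℤ → Type) : Type := ∀ x : ℤ, S x

variable {S : ℤ → Type}

/-- The constraint at site `x` is satisfied in configuration `η`: some update
rule of `x` has all its sites infected. -/
def Constraint (I : ∀ x : ℤ, Set (S x)) (U : ℤ → Finset (Finset ℤ)) (x : ℤ)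
    (η : Config S) : Prop :=
  ∃ u ∈ U x, ∀ y ∈ u, η y ∈ I y

/-- A legal transition of the KCM on volume `L`: the two configurations agree
off a single site `x ∈ L` whose constraint is satisfied. -/
def Step (I : ∀ x : ℤ, Set (S x)) (U : ℤ → Finset (Finset ℤ)) (L : Finset ℤ)
    (η η' : Config S) : Prop :=
  ∃ x ∈ L, Constraint I U x η ∧ ∀ y : ℤ, y ≠ x → η' y = η y

/-- `η` and `η'` belong to the same irreducible component of the KCM on volume
`L` (connected component of the transition graph on configurations). -/
def Reach (I : ∀ x : ℤ, Set (S x)) (U : ℤ → Finset (Finset ℤ)) (L : Finset ℤ)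
    (η η' : Config S) : Prop :=
  Relation.ReflTransGen (fun ζ ζ' => Step I U L ζ ζ' ∨ Step I U L ζ' ζ) η η'

/-- The closure `{η}_L^ω`: the set of sites of `L` whose state can eventually
be updated starting from `η`. -/
def closure (I : ∀ x : ℤ, Set (S x)) (U : ℤ → Finset (Finset ℤ)) (L : Finset ℤ)
    (η : Config S) : Set ℤ :=
  {x | x ∈ L ∧ ∃ η', Reach I U L η η' ∧ Constraint I U x η'}

/-- Replace the states of `η` inside `Λ` by `ξ`. -/
def glue (Λ : Finset ℤ) (η : Config S) (ξ : ∀ x : {y : ℤ // y ∈ Λ}, S x.1) :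
    Config S :=
  fun x => if h : x ∈ Λ then ξ ⟨x, h⟩ else η x

variable [∀ x, Fintype (S x)]

/-- Expectation of `f` when the states of `η` inside `Λ` are resampled from the
product of the measures `π x`, `x ∈ Λ`, conditioned on the event `P`. -/
noncomputable def expOn (π : ∀ x : ℤ, S x → ℝ) (Λ : Finset ℤ)
    (P : Config S → Prop) (η : Config S) (f : Config S → ℝ) : ℝ :=
  (∑ ξ : ∀ x : {y : ℤ // y ∈ Λ}, S x.1,
      if P (glue Λ η ξ) then (∏ x : {y : ℤ // y ∈ Λ}, π x.1 (ξ x)) * f (glue Λ η ξ) else 0) /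
  (∑ ξ : ∀ x : {y : ℤ // y ∈ Λ}, S x.1,
      if P (glue Λ η ξ) then (∏ x : {y : ℤ // y ∈ Λ}, π x.1 (ξ x)) else 0)

/-- Variance of `f` when the states of `η` inside `Λ` are resampled from the
product of the measures `π x`, `x ∈ Λ`, conditioned on the event `P`. -/
noncomputable def varOn (π : ∀ x : ℤ, S x → ℝ) (Λ : Finset ℤ)
    (P : Config S → Prop) (η : Config S) (f : Config S → ℝ) : ℝ :=
  expOn π Λ P η (fun ζ => (f ζ - expOn π Λ P η f) ^ 2)


/-- The whole closure can be simultaneously infected within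
the irreducible component. -/
theorem statement7 (S : ℤ → Type) [∀ x, Fintype (S x)] (L : Finset ℤ)
    (q R : ℝ)
    (hq0 : 0 < q) (hq1 : q ≤ 1) (hR : 1 ≤ R)
    (π : ∀ x : ℤ, S x → ℝ) (I : ∀ x : ℤ, Set (S x)) (U : ℤ → Finset (Finset ℤ))
    (hπpos : ∀ (x : ℤ) (s : S x), 0 < π x s)
    (hπsum : ∀ x : ℤ, ∑ s : S x, π x s = 1)
    (hπI : ∀ x : ℤ, q ≤ ∑ s : S x, if s ∈ I x then π x s else 0)
    (hUx : ∀ x ∈ L, ∀ u ∈ U x, x ∉ u)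
    (hUR : ∀ x ∈ L, ∀ u ∈ U x, ∀ y ∈ u, ((|y - x| : ℤ) : ℝ) ≤ R)
    (η : Config S) :
    ∃ ηstar : Config S, Reach I U L η ηstar ∧
      ∀ x ∈ closure I U L η, ηstar x ∈ I x := by
  classical
  -- choose an infected state at every site
  have hIne : ∀ x : ℤ, ∃ t : S x, t ∈ I x := by
    intro x
    by_contra h
    push_neg at h
    have h0 : (∑ t : S x, if t ∈ I x then π x t else 0) = 0 :=
      Finset.sum_eq_zero (fun t _ => by simp [h t])
    have := hπI x
    rw [h0] at this
    linarith
  choose s hs using hIne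
  -- symmetry of Reach
  have hsymm : ∀ a b : Config S, Reach I U L a b → Reach I U L b a := by
    intro a b hab
    haveI : Std.Symm (fun ζ ζ' : Config S => Step I U L ζ ζ' ∨ Step I U L ζ' ζ) :=
      ⟨fun _ _ h => h.symm⟩
    exact Relation.ReflTransGen.symmetric.symm a b hab
  -- constraint transfer
  have hconstr : ∀ (x : ℤ) (a b : Config S),
      (∀ y, b y = a y ∨ b y ∈ I y) → Constraint I U x a → Constraint I U x b := by
    rintro x a b hab ⟨u, hu, hinf⟩
    exact ⟨u, hu, fun y hy => (hab y).elim (fun h => h ▸ hinf y hy) id⟩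
  -- path modification lemma
  have hmod : ∀ a b : Config S, Reach I U L a b →
      ∃ c : Config S, Reach I U L a c ∧ (∀ y, c y = b y ∨ c y ∈ I y) ∧
        (∀ y, a y ∈ I y → c y ∈ I y) ∧ (∀ y, b y ∈ I y → c y ∈ I y) := by
    intro a b hab
    induction hab with
    | refl => exact ⟨a, Relation.ReflTransGen.refl, fun y => Or.inl rfl,
        fun y h => h, fun y h => h⟩
    | @tail b' c' h1 h2 ih =>
      obtain ⟨c, hac, hc1, hc2, hc3⟩ := ih
      obtain ⟨x, hxL, hxc, heq⟩ :
          ∃ x ∈ L, Constraint I U x b' ∧ ∀ y : ℤ, y ≠ x → c' y = b' y := by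
        rcases h2 with ⟨x, hxL, hxc, heq⟩ | ⟨x, hxL, hxc, heq⟩
        · exact ⟨x, hxL, hxc, heq⟩
        · refine ⟨x, hxL, ?_, fun y hy => (heq y hy).symm⟩
          obtain ⟨u, hu, hinf⟩ := hxc
          refine ⟨u, hu, fun y hy => ?_⟩
          have hyx : y ≠ x := fun h => hUx x hxL u hu (h ▸ hy)
          rw [heq y hyx]
          exact hinf y hy
      refine ⟨Function.update c x (if c' x ∈ I x then c' x else s x), ?_, ?_, ?_, ?_⟩
      · refine hac.tail (Or.inl ⟨x, hxL, hconstr x b' c hc1 hxc,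
          fun y hy => Function.update_of_ne hy _ _⟩)
      · intro y
        by_cases hyx : y = x
        · subst hyx
          rw [Function.update_self]
          by_cases h : c' y ∈ I y
          · exact Or.inl (by simp [h])
          · exact Or.inr (by simp [h, hs y])
        · rw [Function.update_of_ne hyx]
          rw [heq y hyx]
          exact hc1 y
      · intro y hy
        by_cases hyx : y = x
        · subst hyx
          rw [Function.update_self]
          by_cases h : c' y ∈ I y
          · simpa [h] using h
          · simpa [h] using hs y
        · rw [Function.update_of_ne hyx]
          exact hc2 y hy
      · intro y hy
        by_cases hyx : y = x
        · subst hyx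
          rw [Function.update_self]
          simpa [hy] using hy
        · rw [Function.update_of_ne hyx]
          exact hc3 y (by rw [← heq y hyx]; exact hy)
  -- main induction on the deficiency
  have key : ∀ k : ℕ, ∀ ζ : Config S, Reach I U L η ζ →
      L.card ≤ (L.filter (fun y => ζ y ∈ I y)).card + k →
      ∃ ηstar : Config S, Reach I U L η ηstar ∧
        ∀ x ∈ closure I U L η, ηstar x ∈ I x := by
    intro k
    induction k with
    | zero =>
      intro ζ hζ hcard
      refine ⟨ζ, hζ, fun x hx => ?_⟩
      have hfil : L.filter (fun y => ζ y ∈ I y) = L :=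
        Finset.eq_of_subset_of_card_le (Finset.filter_subset _ _) (by omega)
      have hxL : x ∈ L := hx.1
      rw [← hfil] at hxL
      exact (Finset.mem_filter.mp hxL).2
    | succ k ih =>
      intro ζ hζ hcard
      by_cases hall : ∀ x ∈ closure I U L η, ζ x ∈ I x
      · exact ⟨ζ, hζ, hall⟩
      push_neg at hall
      obtain ⟨x, hxcl, hxnot⟩ := hall
      obtain ⟨hxL, η', hη', hconx⟩ := hxcl
      have hζη' : Reach I U L ζ η' := (hsymm _ _ hζ).trans hη'
      obtain ⟨c, hac, hc1, hc2, hc3⟩ := hmod ζ η' hζη'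
      have hconc : Constraint I U x c := hconstr x η' c hc1 hconx
      have hreach : Reach I U L η (Function.update c x (s x)) :=
        hζ.trans (hac.tail (Or.inl ⟨x, hxL, hconc,
          fun y hy => Function.update_of_ne hy _ _⟩))
      have hmono : ∀ y, ζ y ∈ I y → Function.update c x (s x) y ∈ I y := by
        intro y hy
        by_cases hyx : y = x
        · subst hyx; rw [Function.update_self]; exact hs y
        · rw [Function.update_of_ne hyx]; exact hc2 y hy
      have hxnew : Function.update c x (s x) x ∈ I x := by
        rw [Function.update_self]; exact hs x
      have hsub : insert x (L.filter (fun y => ζ y ∈ I y)) ⊆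
          L.filter (fun y => Function.update c x (s x) y ∈ I y) := by
        intro y hy
        rcases Finset.mem_insert.mp hy with rfl | hy
        · exact Finset.mem_filter.mpr ⟨hxL, hxnew⟩
        · obtain ⟨hyL, hyI⟩ := Finset.mem_filter.mp hy
          exact Finset.mem_filter.mpr ⟨hyL, hmono y hyI⟩
      have hxnotin : x ∉ L.filter (fun y => ζ y ∈ I y) := by
        simp [hxnot]
      have hlt : (L.filter (fun y => ζ y ∈ I y)).card <
          (L.filter (fun y => Function.update c x (s x) y ∈ I y)).card := by
        calc (L.filter (fun y => ζ y ∈ I y)).card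
            < (insert x (L.filter (fun y => ζ y ∈ I y))).card := by
              rw [Finset.card_insert_of_notMem hxnotin]; omega
          _ ≤ _ := Finset.card_le_card hsub
      exact ih (Function.update c x (s x)) hreach (by omega)
  exact key L.card η Relation.ReflTransGen.refl (by omega)

end KCM
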